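/- For every nested symmetric set N of separations of a finite set E, there exists a tree-decomposition (T, (P_t | t ∈ V(T))) of E such that the separations corresponding to edges of T are precisely the members of N. -/

import Mathlib

variable {E : Type*}

/-- `f` is symmetric: `f X = f (E \ X)` for all `X ⊆ E`. -/
def FSymm (f : Set E → ℤ) : Prop := ∀ X : Set E, f X = f Xᶜ

/-- `f` is submodular. -/
def FSubmod (f : Set E → ℤ) : Prop :=
  ∀ X Y : Set E, f (X ∩ Y) + f (X ∪ Y) ≤ f X + f Y

/-- Separations `(A,B)` and `(C,D)` are nested: some side of the first
is contained in some side of the second. -/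
def Nested (A B C D : Set E) : Prop := A ⊆ C ∨ A ⊆ D ∨ B ⊆ C ∨ B ⊆ D

/-- `T` is a tangle of order `k+1`: a set of small sides of separations of
order at most `k`, orienting every separation of order at most `k`, such that
no three small sides cover `E` and the complement of a singleton is never small. -/
def IsTangle (f : Set E → ℤ) (k : ℤ) (T : Set (Set E)) : Prop :=
  (∀ A ∈ T, f A ≤ k) ∧
  (∀ A : Set E, f A ≤ k → A ∈ T ∨ Aᶜ ∈ T) ∧
  (∀ A₁ ∈ T, ∀ A₂ ∈ T, ∀ A₃ ∈ T, A₁ ∪ A₂ ∪ A₃ ≠ Set.univ) ∧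
  (∀ e : E, ({e}ᶜ : Set E) ∉ T)

/-- A tangle is maximal if it is not included in any other tangle. -/
def IsMaximalTangle (f : Set E → ℤ) (T : Set (Set E)) : Prop :=
  (∃ k, IsTangle f k T) ∧
  ∀ T' : Set (Set E), (∃ k, IsTangle f k T') → T ⊆ T' → T' = T

/-- The separation with sides `A`, `Aᶜ` distinguishes the tangles `P` and `Q`. -/
def Distinguishes (A : Set E) (P Q : Set (Set E)) : Prop :=
  (A ∈ P ∧ Aᶜ ∈ Q) ∨ (Aᶜ ∈ P ∧ A ∈ Q)

/-- The separation with sides `A`, `Aᶜ` distinguishes `P` and `Q` efficiently. -/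
def DistinguishesEff (f : Set E → ℤ) (A : Set E) (P Q : Set (Set E)) : Prop :=
  Distinguishes A P Q ∧ ∀ C : Set E, Distinguishes C P Q → f A ≤ f C

variable {V : Type*}

/-- `P` is a partition of `E` into (possibly empty) classes indexed by `V`. -/
def IsPartitionFam (P : V → Set E) : Prop :=
  (∀ x y : V, x ≠ y → Disjoint (P x) (P y)) ∧ (⋃ x, P x) = Set.univ

/-- For an edge `tu` of the decomposition tree `G`, the side `S_t` of the
corresponding separation: the union of the parts over the component of
`G - tu` containing `t`. -/
def treeSide (G : SimpleGraph V) (P : V → Set E) (t u : V) : Set E :=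
  ⋃ x ∈ {x | (G.deleteEdges {s(t, u)}).Reachable t x}, P x



/-- Add a new leaf (the `none` vertex) attached at `t`. -/
def addLeaf (G : SimpleGraph V) (t : V) : SimpleGraph (Option V) where
  Adj a b := (∃ u v, a = some u ∧ b = some v ∧ G.Adj u v) ∨
    (a = none ∧ b = some t) ∨ (a = some t ∧ b = none)
  symm := by
    constructor
    rintro a b (⟨u, v, rfl, rfl, h⟩ | ⟨rfl, rfl⟩ | ⟨rfl, rfl⟩)
    · exact Or.inl ⟨v, u, rfl, rfl, h.symm⟩
    · exact Or.inr (Or.inr ⟨rfl, rfl⟩)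
    · exact Or.inr (Or.inl ⟨rfl, rfl⟩)
  loopless := by
    constructor
    rintro a (⟨u, v, rfl, h, huv⟩ | ⟨rfl, h⟩ | ⟨rfl, h⟩)
    · exact huv.ne (Option.some.inj h)
    · exact nomatch h
    · exact nomatch h

@[simp] lemma addLeaf_adj_some {G : SimpleGraph V} {t u v : V} :
    (addLeaf G t).Adj (some u) (some v) ↔ G.Adj u v := by
  constructor
  · rintro (⟨a, b, ha, hb, h⟩ | ⟨h, _⟩ | ⟨_, h⟩)
    · obtain rfl := Option.some.inj ha; obtain rfl := Option.some.inj hb; exact h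
    · exact nomatch h
    · exact nomatch h
  · exact fun h => Or.inl ⟨u, v, rfl, rfl, h⟩

@[simp] lemma addLeaf_adj_none_left {G : SimpleGraph V} {t : V} {b : Option V} :
    (addLeaf G t).Adj none b ↔ b = some t := by
  constructor
  · rintro (⟨a, c, ha, _, _⟩ | ⟨_, h⟩ | ⟨h, _⟩)
    · exact nomatch ha
    · exact h
    · exact nomatch h.symm
  · rintro rfl; exact Or.inr (Or.inl ⟨rfl, rfl⟩)

@[simp] lemma addLeaf_adj_none_right {G : SimpleGraph V} {t : V} {a : Option V} :
    (addLeaf G t).Adj a none ↔ a = some t := by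
  rw [SimpleGraph.adj_comm, addLeaf_adj_none_left]

/-- The leaf is isolated after deleting the leaf edge. -/
lemma addLeaf_leaf_isolated {G : SimpleGraph V} {t : V} {y : Option V}
    (h : ((addLeaf G t).deleteEdges {s(none, some t)}).Reachable none y) : y = none := by
  obtain ⟨w⟩ := h
  cases w with
  | nil => rfl
  | cons h q =>
    rw [SimpleGraph.deleteEdges_adj] at h
    obtain ⟨h1, h2⟩ := h
    rw [addLeaf_adj_none_left] at h1
    subst h1
    exact absurd rfl h2

/-- Walks in `addLeaf G t` minus an old edge project to the original graph. -/
lemma addLeaf_descend {G : SimpleGraph V} {t u v : V} :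
    ∀ {a y : Option V}
      (_ : ((addLeaf G t).deleteEdges {s(some u, some v)}).Walk a y),
      (G.deleteEdges {s(u, v)}).Reachable (a.getD t) (y.getD t) := by
  intro a y w
  induction w with
  | nil => exact SimpleGraph.Reachable.refl _
  | @cons a b y h q ih =>
    rw [SimpleGraph.deleteEdges_adj] at h
    obtain ⟨h1, h2⟩ := h
    rcases h1 with ⟨p, q', rfl, rfl, hpq⟩ | ⟨rfl, rfl⟩ | ⟨rfl, rfl⟩
    · refine SimpleGraph.Reachable.trans (SimpleGraph.Adj.reachable ?_) ih
      rw [SimpleGraph.deleteEdges_adj]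
      refine ⟨hpq, fun hmem => h2 ?_⟩
      simp only [Set.mem_singleton_iff, Sym2.eq_iff] at hmem ⊢
      rcases hmem with ⟨rfl, rfl⟩ | ⟨rfl, rfl⟩
      · exact Or.inl ⟨rfl, rfl⟩
      · exact Or.inr ⟨rfl, rfl⟩
    · exact ih
    · exact ih

/-- `some` as a hom into `addLeaf` minus an edge not of the form `s(some _, some _)`. -/
lemma addLeaf_lift_adj {G : SimpleGraph V} {t p q u v : V} (h : G.Adj p q)
    (hne : s(p, q) ≠ s(u, v)) :
    ((addLeaf G t).deleteEdges {s(some u, some v)}).Adj (some p) (some q) := by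
  rw [SimpleGraph.deleteEdges_adj]
  refine ⟨addLeaf_adj_some.2 h, fun hmem => hne ?_⟩
  simp only [Set.mem_singleton_iff, Sym2.eq_iff] at hmem ⊢
  rcases hmem with ⟨h1, h2⟩ | ⟨h1, h2⟩
  · exact Or.inl ⟨Option.some.inj h1, Option.some.inj h2⟩
  · exact Or.inr ⟨Option.some.inj h1, Option.some.inj h2⟩

lemma addLeaf_lift_reach {G : SimpleGraph V} {t u v : V} {p q : V}
    (h : (G.deleteEdges {s(u, v)}).Reachable p q) :
    ((addLeaf G t).deleteEdges {s(some u, some v)}).Reachable (some p) (some q) := by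
  refine SimpleGraph.Reachable.map
    ⟨some, fun hadj => ?_⟩ h
  rw [SimpleGraph.deleteEdges_adj] at hadj
  exact addLeaf_lift_adj hadj.1 (by simpa using hadj.2)

lemma addLeaf_lift_reach_newedge {G : SimpleGraph V} {t : V} {p q : V}
    (h : G.Reachable p q) :
    ((addLeaf G t).deleteEdges {s(none, some t)}).Reachable (some p) (some q) := by
  refine SimpleGraph.Reachable.map ⟨some, fun hadj => ?_⟩ h
  rw [SimpleGraph.deleteEdges_adj]
  refine ⟨addLeaf_adj_some.2 hadj, fun hmem => ?_⟩
  simp only [Set.mem_singleton_iff, Sym2.eq_iff] at hmem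
  rcases hmem with ⟨h1, _⟩ | ⟨_, h1⟩ <;> exact nomatch h1

lemma addLeaf_isTree {G : SimpleGraph V} (hG : G.IsTree) (t : V) : (addLeaf G t).IsTree := by
  constructor
  · -- connected
    have hpre : (addLeaf G t).Preconnected := by
      have hub : ∀ a : Option V, (addLeaf G t).Reachable a (some t) := by
        rintro (_ | x)
        · exact SimpleGraph.Adj.reachable (addLeaf_adj_none_left.2 rfl)
        · exact SimpleGraph.Reachable.map ⟨some, fun h => addLeaf_adj_some.2 h⟩
            (hG.isConnected.preconnected x t)
      exact fun a b => (hub a).trans (hub b).symm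
    have : Nonempty (Option V) := ⟨none⟩
    exact ⟨hpre⟩
  · -- acyclic
    rw [SimpleGraph.isAcyclic_iff_forall_adj_isBridge]
    rintro a b hadj
    rw [SimpleGraph.isBridge_iff]
    have _hadj := hadj
    rcases hadj with ⟨u, v, rfl, rfl, huv⟩ | ⟨rfl, rfl⟩ | ⟨rfl, rfl⟩
    · intro hreach
      have : (G.deleteEdges {s(u, v)}).Reachable u v := by
        simpa using addLeaf_descend (t := t) hreach.some
      have hbridge := (SimpleGraph.isAcyclic_iff_forall_adj_isBridge.1 hG.IsAcyclic) huv
      rw [SimpleGraph.isBridge_iff] at hbridge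
      exact hbridge this
    · intro hreach
      exact nomatch (addLeaf_leaf_isolated hreach)
    · intro hreach
      have h2 : ((addLeaf G t).deleteEdges {s(none, some t)}).Reachable none (some t) := by
        rw [show s(none, some t) = s(some t, (none : Option V)) from Sym2.eq_swap]
        exact hreach.symm
      exact nomatch (addLeaf_leaf_isolated h2)

lemma addLeaf_reach_some_iff {G : SimpleGraph V} {t u v x : V} :
    ((addLeaf G t).deleteEdges {s(some u, some v)}).Reachable (some u) (some x) ↔
      (G.deleteEdges {s(u, v)}).Reachable u x := by
  constructor
  · intro h
    simpa using addLeaf_descend (t := t) h.some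
  · exact addLeaf_lift_reach

lemma addLeaf_reach_none_iff {G : SimpleGraph V} {t u v : V} :
    ((addLeaf G t).deleteEdges {s(some u, some v)}).Reachable (some u) none ↔
      (G.deleteEdges {s(u, v)}).Reachable u t := by
  constructor
  · intro h
    simpa using addLeaf_descend (t := t) h.some
  · intro h
    refine (addLeaf_lift_reach (t := t) h).trans (SimpleGraph.Adj.reachable ?_)
    rw [SimpleGraph.deleteEdges_adj]
    refine ⟨addLeaf_adj_none_right.2 rfl, fun hmem => ?_⟩
    simp only [Set.mem_singleton_iff, Sym2.eq_iff] at hmem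
    rcases hmem with ⟨_, h1⟩ | ⟨_, h1⟩ <;> exact nomatch h1

lemma treeSide_addLeaf_new₁ (G : SimpleGraph V) (t : V) (P2 : Option V → Set E) :
    treeSide (addLeaf G t) P2 none (some t) = P2 none := by
  ext z
  simp only [treeSide, Set.mem_iUnion, Set.mem_setOf_eq, exists_prop]
  constructor
  · rintro ⟨y, hy, hz⟩
    rwa [addLeaf_leaf_isolated hy] at hz
  · exact fun hz => ⟨none, SimpleGraph.Reachable.refl _, hz⟩

lemma treeSide_addLeaf_new₂ {G : SimpleGraph V} (hG : G.Preconnected) (t : V)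
    (P2 : Option V → Set E) :
    treeSide (addLeaf G t) P2 (some t) none = ⋃ x, P2 (some x) := by
  have hswap : s(some t, (none : Option V)) = s(none, some t) := Sym2.eq_swap
  ext z
  simp only [treeSide, Set.mem_iUnion, Set.mem_setOf_eq, exists_prop, hswap]
  constructor
  · rintro ⟨y, hy, hz⟩
    cases y with
    | none => exact absurd (addLeaf_leaf_isolated hy.symm) (by simp)
    | some x => exact ⟨x, hz⟩
  · rintro ⟨x, hz⟩
    exact ⟨some x, addLeaf_lift_reach_newedge (hG t x), hz⟩

lemma treeSide_addLeaf_old {G : SimpleGraph V} {t₀ u v : V} {P : V → Set E} {A : Set E}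
    (hPd : ∀ x y : V, x ≠ y → Disjoint (P x) (P y)) (hA : A ⊆ P t₀) :
    treeSide (addLeaf G t₀) (fun o => Option.rec A (fun x => P x \ A) o) (some u) (some v)
      = treeSide G P u v := by
  ext z
  simp only [treeSide, Set.mem_iUnion, Set.mem_setOf_eq, exists_prop]
  constructor
  · rintro ⟨y, hy, hz⟩
    cases y with
    | none => exact ⟨t₀, addLeaf_reach_none_iff.1 hy, hA hz⟩
    | some x => exact ⟨x, addLeaf_reach_some_iff.1 hy, hz.1⟩
  · rintro ⟨x, hx, hz⟩
    by_cases hzA : z ∈ A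
    · have hxt : x = t₀ := by
        by_contra hne
        exact (hPd x t₀ hne).ne_of_mem hz (hA hzA) rfl
      subst hxt
      exact ⟨none, addLeaf_reach_none_iff.2 hx, hzA⟩
    · exact ⟨some x, addLeaf_reach_some_iff.2 hx, hz, hzA⟩

lemma exists_sep {G : SimpleGraph V} (hT : G.IsTree) {t u : V} (hne : t ≠ u) :
    ∃ v, G.Adj t v ∧ ¬(G.deleteEdges {s(t, v)}).Reachable t v ∧
      (G.deleteEdges {s(t, v)}).Reachable v u := by
  classical
  obtain ⟨w⟩ := hT.isConnected.preconnected t u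
  have hp : w.bypass.IsPath := w.bypass_isPath
  rcases hpe : w.bypass with _ | ⟨hadj, q⟩
  · exact absurd rfl hne
  · rename_i b
    rw [hpe] at hp
    have hnd : s(t, b) ∉ q.edges := by
      have := hp.isTrail.edges_nodup
      rw [SimpleGraph.Walk.edges_cons] at this
      exact (List.nodup_cons.mp this).1
    refine ⟨b, hadj, ?_, ?_⟩
    · have hbr := (SimpleGraph.isAcyclic_iff_forall_adj_isBridge.1 hT.IsAcyclic) hadj
      rw [SimpleGraph.isBridge_iff] at hbr
      exact hbr
    · exact ⟨q.toDeleteEdges {s(t, b)} (fun e he => by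
        simp only [Set.mem_singleton_iff]
        exact fun hh => hnd (hh ▸ he))⟩

lemma build_empty :
    ∃ (V : Type) (_ : Fintype V) (G : SimpleGraph V) (P : V → Set E),
      G.IsTree ∧ IsPartitionFam P ∧
      {p : Set E × Set E | ∃ t u, G.Adj t u ∧
        p = (treeSide G P t u, treeSide G P u t)} = (∅ : Set (Set E × Set E)) := by
  refine ⟨PUnit, inferInstance, ⊥, fun _ => Set.univ, ⟨?_, SimpleGraph.isAcyclic_bot⟩, ?_, ?_⟩
  · haveI : Nonempty PUnit := ⟨PUnit.unit⟩
    refine ⟨fun a b => ?_⟩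
    have : a = b := Subsingleton.elim a b
    subst this
    exact SimpleGraph.Reachable.refl a
  · exact ⟨fun x y hxy => absurd (Subsingleton.elim x y) hxy, by rw [Set.iUnion_const]⟩
  · ext p
    simp only [Set.mem_setOf_eq, Set.mem_empty_iff_false, iff_false]
    rintro ⟨t, u, h, -⟩
    exact h

theorem build [Fintype E] : ∀ (n : ℕ) (N : Set (Set E × Set E)),
    N.ncard ≤ n →
    (∀ p ∈ N, p.2 = p.1ᶜ) →
    (∀ p ∈ N, ∀ q ∈ N, Nested p.1 p.2 q.1 q.2) →
    (∀ p : Set E × Set E, p ∈ N ↔ (p.2, p.1) ∈ N) →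
    ∃ (V : Type) (_ : Fintype V) (G : SimpleGraph V) (P : V → Set E),
      G.IsTree ∧ IsPartitionFam P ∧
      {p : Set E × Set E | ∃ t u, G.Adj t u ∧
        p = (treeSide G P t u, treeSide G P u t)} = N := by
  intro n
  induction n with
  | zero =>
    intro N hcard _ _ _
    have : N = ∅ := by
      have := Nat.le_zero.mp hcard
      rwa [Set.ncard_eq_zero N.toFinite] at this
    subst this
    exact build_empty
  | succ n ih =>
    intro N hcard hSep hNested hSymm
    rcases N.eq_empty_or_nonempty with rfl | ⟨⟨A0, B0⟩, hAB0⟩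
    · exact build_empty
    obtain ⟨A, hAS, hAmin⟩ : ∃ A ∈ Prod.fst '' N, ∀ a' ∈ Prod.fst '' N, id a' ≤ id A → id A = id a' := by
      obtain ⟨A, hAS, hAmin⟩ := Set.Finite.exists_minimalFor id (Prod.fst '' N)
        (N.toFinite.image _) ⟨A0, ⟨(A0, B0), hAB0, rfl⟩⟩
      exact ⟨A, hAS, fun a' ha' h => le_antisymm (hAmin ha' h) h⟩
    simp only [id] at hAmin
    obtain ⟨pA, hpA, hfst⟩ := hAS
    have hAN : (A, Aᶜ) ∈ N := by
      have h2 : pA = (A, Aᶜ) := by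
        have := hSep pA hpA
        cases pA
        simp only [Prod.mk.injEq] at hfst ⊢
        subst hfst
        exact ⟨rfl, this⟩
      rwa [h2] at hpA
    have hAcN : (Aᶜ, A) ∈ N := (hSymm (A, Aᶜ)).1 hAN
    set N' := N \ {(A, Aᶜ), (Aᶜ, A)} with hN'
    have hsub : N' ⊆ N := Set.diff_subset
    have hcard' : N'.ncard ≤ n := by
      have hlt : N'.ncard < N.ncard := by
        refine Set.ncard_lt_ncard ⟨Set.diff_subset, fun hss => ?_⟩ N.toFinite
        exact (hss hAN).2 (Set.mem_insert _ _)
      omega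
    have hSep' : ∀ p ∈ N', p.2 = p.1ᶜ := fun p hp => hSep p hp.1
    have hNested' : ∀ p ∈ N', ∀ q ∈ N', Nested p.1 p.2 q.1 q.2 :=
      fun p hp q hq => hNested p hp.1 q hq.1
    have hSymm' : ∀ p : Set E × Set E, p ∈ N' ↔ (p.2, p.1) ∈ N' := by
      intro p
      have hps : ∀ X Y : Set E, ((p.2, p.1) = (X, Y)) ↔ p = (Y, X) := by
        intro X Y
        cases p
        simp only [Prod.mk.injEq]
        exact and_comm
      simp only [hN', Set.mem_diff, Set.mem_insert_iff, Set.mem_singleton_iff, hps,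
        ← hSymm p]
      tauto
    obtain ⟨V, hFin, G, P, hTree, hPart, hEq⟩ := ih N' hcard' hSep' hNested' hSymm'
    haveI := hFin
    haveI : Nonempty V := hTree.isConnected.nonempty
    -- the corner fact: A fits inside one side of every other separation
    have hCorner : ∀ q ∈ N', A ⊆ q.1 ∨ A ⊆ q.1ᶜ := by
      intro q hq
      have hqN := hsub hq
      have hq2 := hSep q hqN
      rcases hNested (A, Aᶜ) hAN q hqN with h | h | h | h
      · exact Or.inl h
      · exact Or.inr (hq2 ▸ h)
      · exfalso
        have h1 : q.1ᶜ ⊆ A := Set.compl_subset_comm.mp h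
        have hmem : q.1ᶜ ∈ Prod.fst '' N := ⟨(q.2, q.1), (hSymm q).1 hqN, by rw [hq2]⟩
        have hAeq : A = q.1ᶜ := hAmin _ hmem h1
        refine hq.2 (Or.inr ?_)
        have hq1 : q.1 = Aᶜ := by rw [hAeq, compl_compl]
        rw [Set.mem_singleton_iff, Prod.ext_iff]
        exact ⟨hq1, by rw [hq2, hq1, compl_compl]⟩
      · exfalso
        have h1 : q.1 ⊆ A := by
          rw [hq2] at h
          exact Set.compl_subset_compl.mp h
        have hmem : q.1 ∈ Prod.fst '' N := ⟨q, hqN, rfl⟩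
        have hAeq : A = q.1 := hAmin _ hmem h1
        refine hq.2 (Or.inl ?_)
        rw [Prod.ext_iff]
        exact ⟨hAeq.symm, by rw [hq2, ← hAeq]⟩
    -- find a node whose part contains A
    obtain ⟨t₀, hA⟩ : ∃ t₀, A ⊆ P t₀ := by
      rcases A.eq_empty_or_nonempty with rfl | ⟨e, he⟩
      · exact ⟨Classical.arbitrary V, Set.empty_subset _⟩
      obtain ⟨t₀, ht₀⟩ : ∃ t₀, e ∈ P t₀ := by
        have : e ∈ ⋃ x, P x := hPart.2.symm ▸ Set.mem_univ e
        exact Set.mem_iUnion.1 this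
      refine ⟨t₀, fun x hx => ?_⟩
      by_contra hxP
      obtain ⟨u, hu⟩ : ∃ u, x ∈ P u := by
        have : x ∈ ⋃ y, P y := hPart.2.symm ▸ Set.mem_univ x
        exact Set.mem_iUnion.1 this
      have hne : t₀ ≠ u := fun h => hxP (h ▸ hu)
      obtain ⟨v, hadj, hbr, hvu⟩ := exists_sep hTree hne
      have hB : (treeSide G P t₀ v, treeSide G P v t₀) ∈ N' := by
        rw [← hEq]; exact ⟨t₀, v, hadj, rfl⟩
      have hsep2 : treeSide G P v t₀ = (treeSide G P t₀ v)ᶜ := hSep' _ hB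
      have heB : e ∈ treeSide G P t₀ v := by
        simp only [treeSide, Set.mem_iUnion, Set.mem_setOf_eq, exists_prop]
        exact ⟨t₀, SimpleGraph.Reachable.refl _, ht₀⟩
      have hxB' : x ∈ treeSide G P v t₀ := by
        simp only [treeSide, Set.mem_iUnion, Set.mem_setOf_eq, exists_prop]
        refine ⟨u, ?_, hu⟩
        rw [show s(v, t₀) = s(t₀, v) from Sym2.eq_swap]
        exact hvu
      rw [hsep2] at hxB'
      rcases hCorner _ hB with hc | hc
      · exact hxB' (hc hx)
      · exact (hc he) heB
    -- assemble the new tree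
    have hU : (⋃ x, (P x \ A)) = Aᶜ := by
      ext z
      simp only [Set.mem_iUnion, Set.mem_diff, Set.mem_compl_iff]
      constructor
      · rintro ⟨x, -, hz⟩; exact hz
      · intro hz
        obtain ⟨x, hx⟩ : ∃ x, z ∈ P x := by
          have : z ∈ ⋃ y, P y := hPart.2.symm ▸ Set.mem_univ z
          exact Set.mem_iUnion.1 this
        exact ⟨x, hx, hz⟩
    have hold : ∀ u v : V, treeSide (addLeaf G t₀)
        (fun o => Option.rec A (fun x => P x \ A) o) (some u) (some v)
          = treeSide G P u v := fun u v => treeSide_addLeaf_old hPart.1 hA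
    have hnew₁ : treeSide (addLeaf G t₀)
        (fun o => Option.rec A (fun x => P x \ A) o) none (some t₀) = A :=
      treeSide_addLeaf_new₁ G t₀ _
    have hnew₂ : treeSide (addLeaf G t₀)
        (fun o => Option.rec A (fun x => P x \ A) o) (some t₀) none = Aᶜ := by
      rw [treeSide_addLeaf_new₂ hTree.isConnected.preconnected]
      exact hU
    refine ⟨Option V, inferInstance, addLeaf G t₀,
      fun o => Option.rec A (fun x => P x \ A) o, addLeaf_isTree hTree t₀, ⟨?_, ?_⟩, ?_⟩
    · rintro (_ | x) (_ | y) hxy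
      · exact absurd rfl hxy
      · exact Set.disjoint_sdiff_right
      · exact Set.disjoint_sdiff_left
      · have hne : x ≠ y := fun h => hxy (h ▸ rfl)
        exact (hPart.1 x y hne).mono Set.diff_subset Set.diff_subset
    · apply Set.eq_univ_of_forall
      intro z
      by_cases hz : z ∈ A
      · exact Set.mem_iUnion.2 ⟨none, hz⟩
      · obtain ⟨x, hx⟩ : ∃ x, z ∈ P x := by
          have : z ∈ ⋃ y, P y := hPart.2.symm ▸ Set.mem_univ z
          exact Set.mem_iUnion.1 this
        exact Set.mem_iUnion.2 ⟨some x, hx, hz⟩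
    · ext p
      simp only [Set.mem_setOf_eq]
      constructor
      · rintro ⟨a, b, hadj, rfl⟩
        rcases hadj with ⟨u, v, rfl, rfl, huv⟩ | ⟨rfl, rfl⟩ | ⟨rfl, rfl⟩
        · rw [hold u v, hold v u]
          refine hsub ?_
          rw [← hEq]
          exact ⟨u, v, huv, rfl⟩
        · rw [hnew₁, hnew₂]
          exact hAN
        · rw [hnew₁, hnew₂]
          exact hAcN
      · intro hp
        by_cases h1 : p = (A, Aᶜ)
        · exact ⟨none, some t₀, addLeaf_adj_none_left.2 rfl, by rw [hnew₁, hnew₂, h1]⟩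
        by_cases h2 : p = (Aᶜ, A)
        · exact ⟨some t₀, none, addLeaf_adj_none_right.2 rfl, by rw [hnew₁, hnew₂, h2]⟩
        have hp' : p ∈ N' := ⟨hp, by
          simp only [Set.mem_insert_iff, Set.mem_singleton_iff]
          tauto⟩
        rw [← hEq] at hp'
        obtain ⟨u, v, huv, rfl⟩ := hp'
        exact ⟨some u, some v, addLeaf_adj_some.2 huv, by rw [hold u v, hold v u]⟩

/-- For every nested symmetric set `N` of separations there is a
tree-decomposition whose edge-separations are precisely the members of `N`. -/
theorem stmt_12 [Fintype E] (N : Set (Set E × Set E))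
    (hSep : ∀ p ∈ N, p.2 = p.1ᶜ)
    (hNested : ∀ p ∈ N, ∀ q ∈ N, Nested p.1 p.2 q.1 q.2)
    (hSymm : ∀ p : Set E × Set E, p ∈ N ↔ (p.2, p.1) ∈ N) :
    ∃ (V : Type) (_ : Fintype V) (G : SimpleGraph V) (P : V → Set E),
      G.IsTree ∧ IsPartitionFam P ∧
      {p : Set E × Set E | ∃ t u, G.Adj t u ∧
        p = (treeSide G P t u, treeSide G P u t)} = N := by
  exact build N.ncard N le_rfl hSep hNested hSymm
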